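/- Let N ≥ 3 and let λ₁, …, λ_N be strictly positive reals and s ≤ 0 a real number. Then there exist 0 < y₁ < y₂ such that for every y ∈ (y₁, y₂), setting w := s + iy, one has ∏_{n=1}^N √(1 − 2wλₙ) = −√(∏_{n=1}^N (1 − 2wλₙ)), where √ is the principal square root. -/
import Mathlib


open Complex Finset
open Real

lemma arg_eq_arctan' {z : ℂ} (hz : 0 < z.re) : z.arg = Real.arctan (z.im / z.re) := by
  have h1 : z.arg < π / 2 := by
    rcases lt_or_ge z.im 0 with h | h
    · exact lt_of_le_of_ne (Complex.arg_le_pi_div_two_iff.mpr (Or.inl hz.le))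
        (fun he => by have := Complex.arg_eq_pi_div_two_iff.mp he; linarith [this.1])
    · exact lt_of_le_of_ne (Complex.arg_le_pi_div_two_iff.mpr (Or.inl hz.le))
        (fun he => by have := Complex.arg_eq_pi_div_two_iff.mp he; linarith [this.1])
  have h2 : -(π / 2) < z.arg := by
    refine lt_of_le_of_ne (Complex.neg_pi_div_two_le_arg_iff.mpr (Or.inl hz.le)) ?_
    intro he
    have := Complex.arg_eq_neg_pi_div_two_iff.mp he.symm
    linarith [this.1]
  rw [← Complex.tan_arg, Real.arctan_tan h2 h1]

lemma key_sign {N : ℕ} (z : Fin N → ℂ) (hz : ∀ n, z n ≠ 0)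
    (h1 : -(3*π/2) < ∑ n, (z n).arg) (h2 : ∑ n, (z n).arg < -π) :
    ∏ n, z n ^ (1/2:ℂ) = -((∏ n, z n) ^ (1/2:ℂ)) := by
  have hprod : ∏ n, z n ≠ 0 := Finset.prod_ne_zero_iff.mpr (fun n _ => hz n)
  set S : ℂ := ∑ n, Complex.log (z n) with hS
  have hexp : Complex.exp S = ∏ n, z n := by
    rw [hS, Complex.exp_sum]
    exact Finset.prod_congr rfl (fun n _ => Complex.exp_log (hz n))
  have heq : Complex.exp (Complex.log (∏ n, z n)) = Complex.exp S := by
    rw [Complex.exp_log hprod, hexp]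
  obtain ⟨k, hk⟩ := Complex.exp_eq_exp_iff_exists_int.mp heq
  have hSim : S.im = ∑ n, (z n).arg := by
    rw [hS, Complex.im_sum]
    exact Finset.sum_congr rfl (fun n _ => Complex.log_im _)
  have him : (Complex.log (∏ n, z n)).im = S.im + k * (2*π) := by
    rw [hk]
    simp [Complex.add_im, Complex.mul_im, Complex.mul_re]
  have hlow : -π < (Complex.log (∏ n, z n)).im := by
    rw [Complex.log_im]; exact Complex.neg_pi_lt_arg _
  have hhigh : (Complex.log (∏ n, z n)).im ≤ π := by
    rw [Complex.log_im]; exact Complex.arg_le_pi _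
  have hk1 : k = 1 := by
    have hπ := Real.pi_pos
    have hb1 : (0:ℝ) < k * (2*π) := by rw [hSim] at him; nlinarith
    have hb2 : k * (2*π) < 4*π := by rw [hSim] at him; nlinarith
    have hk0 : (0:ℤ) < k := by
      by_contra h
      push_neg at h
      have : (k:ℝ) ≤ 0 := by exact_mod_cast h
      nlinarith
    have hk2 : k < 2 := by
      by_contra h
      push_neg at h
      have : (2:ℝ) ≤ (k:ℝ) := by exact_mod_cast h
      nlinarith
    omega
  have hL : ∏ n, z n ^ (1/2:ℂ) = Complex.exp (S * (1/2)) := by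
    have hc : ∀ n ∈ Finset.univ, z n ^ (1/2:ℂ) = Complex.exp (Complex.log (z n) * (1/2)) :=
      fun n _ => Complex.cpow_def_of_ne_zero (hz n) _
    rw [Finset.prod_congr rfl hc, ← Complex.exp_sum, ← Finset.sum_mul, ← hS]
  have hR : (∏ n, z n) ^ (1/2:ℂ) = Complex.exp (S * (1/2)) * Complex.exp (π * I) := by
    rw [Complex.cpow_def_of_ne_zero hprod, hk, hk1, ← Complex.exp_add]
    congr 1
    push_cast
    ring
  rw [hL, hR, Complex.exp_pi_mul_I]
  ring

/-- For `N ≥ 3`, strictly positive `λ₁, …, λ_N` and `s ≤ 0`, there exist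
`0 < y₁ < y₂` such that for every `y ∈ (y₁, y₂)`, setting `w := s + iy`, the principal
square roots satisfy `∏ₙ √(1 − 2wλₙ) = −√(∏ₙ (1 − 2wλₙ))`. -/
theorem stmt9 (N : ℕ) (hN : 3 ≤ N) (lam : Fin N → ℝ) (hlam : ∀ n, 0 < lam n)
    (s : ℝ) (hs : s ≤ 0) :
    ∃ y₁ y₂ : ℝ, 0 < y₁ ∧ y₁ < y₂ ∧
      ∀ y ∈ Set.Ioo y₁ y₂,
        (∏ n, (1 - 2 * ((s : ℂ) + (y : ℂ) * Complex.I) * (lam n : ℂ)) ^ (1 / 2 : ℂ))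
          = -((∏ n, (1 - 2 * ((s : ℂ) + (y : ℂ) * Complex.I) * (lam n : ℂ))) ^ (1 / 2 : ℂ)) := by

  have hπ := Real.pi_pos
  set a : Fin N → ℝ := fun n => 1 - 2*s*lam n with ha
  have ha1 : ∀ n, 1 ≤ a n := fun n => by have := hlam n; simp only [ha]; nlinarith
  set g : ℝ → ℝ := fun y => ∑ n, Real.arctan (2*lam n*y/(a n)) with hg
  have hgc : Continuous g := continuous_finset_sum _ fun n _ =>
    Real.continuous_arctan.comp ((continuous_const.mul continuous_id).div_const _)
  have hg0 : g 0 = 0 := by simp [hg]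
  have hne : (Finset.univ : Finset (Fin N)).Nonempty :=
    ⟨⟨0, by omega⟩, Finset.mem_univ _⟩
  set T := Real.tan (5*π/12) with hT
  have hT0 : 0 < T := Real.tan_pos_of_pos_of_lt_pi_div_two (by linarith) (by linarith)
  set Y := (Finset.univ.sup' hne (fun n => a n * T / (2*lam n))) + 1 with hY
  have hYn : ∀ n, a n * T / (2*lam n) < Y :=
    fun n => lt_of_le_of_lt (Finset.le_sup' (fun n => a n * T / (2*lam n)) (Finset.mem_univ n)) (lt_add_one _)
  have hY0 : 0 < Y := by
    obtain ⟨n0, _⟩ := hne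
    have h1 : 0 < a n0 * T / (2*lam n0) := by
      have := hlam n0; have := ha1 n0; positivity
    exact lt_trans h1 (hYn n0)
  have hterm : ∀ n, 5*π/12 < Real.arctan (2*lam n*Y/(a n)) := by
    intro n
    have hl : (0:ℝ) < 2*lam n := by linarith [hlam n]
    have hap : (0:ℝ) < a n := by linarith [ha1 n]
    have h2 : a n * T < Y * (2*lam n) := (div_lt_iff₀ hl).mp (hYn n)
    have h3 : T < 2*lam n*Y/(a n) := by rw [lt_div_iff₀ hap]; nlinarith
    calc 5*π/12 = Real.arctan T := (Real.arctan_tan (by linarith) (by linarith)).symm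
      _ < _ := Real.arctan_strictMono h3
  have hgY : 5*π/4 < g Y := by
    have hsum : ∑ _n : Fin N, (5*π/12) < g Y :=
      Finset.sum_lt_sum_of_nonempty hne (fun n _ => hterm n)
    rw [Finset.sum_const, Finset.card_univ, Fintype.card_fin, nsmul_eq_mul] at hsum
    have hN3 : (3:ℝ) ≤ (N:ℝ) := by exact_mod_cast hN
    nlinarith
  obtain ⟨y₀, hy₀mem, hy₀eq⟩ : (5*π/4 : ℝ) ∈ g '' (Set.Ioo 0 Y) := by
    apply intermediate_value_Ioo hY0.le hgc.continuousOn
    rw [hg0]; exact ⟨by linarith, hgY⟩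
  obtain ⟨δ, hδ0, hδ⟩ := Metric.continuousAt_iff.mp (hgc.continuousAt (x := y₀)) (π/4)
    (by linarith)
  set ε := min δ (y₀/2) with hε
  have hε0 : 0 < ε := lt_min hδ0 (by linarith [hy₀mem.1])
  refine ⟨y₀ - ε, y₀ + ε, ?_, by linarith, ?_⟩
  · have : ε ≤ y₀/2 := min_le_right _ _
    linarith [hy₀mem.1]
  intro y hy
  have hdist : dist y y₀ < δ := by
    rw [Real.dist_eq, abs_lt]
    constructor <;> [skip; skip] <;>
      · have h1 := hy.1; have h2 := hy.2; have := min_le_left δ (y₀/2); linarith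
  have hgy := hδ hdist
  rw [Real.dist_eq, hy₀eq, abs_lt] at hgy
  -- now π < g y < 3π/2
  have hgl : π < g y := by linarith [hgy.1]
  have hgu : g y < 3*π/2 := by linarith [hgy.2]
  have hre : ∀ n, ((1:ℂ) - 2 * ((s : ℂ) + (y : ℂ) * Complex.I) * (lam n : ℂ)).re = a n := by
    intro n
    simp [ha, Complex.sub_re, Complex.mul_re, Complex.add_re, Complex.add_im,
      Complex.mul_im]
    try ring
  have him : ∀ n, ((1:ℂ) - 2 * ((s : ℂ) + (y : ℂ) * Complex.I) * (lam n : ℂ)).im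
      = -(2*lam n*y) := by
    intro n
    simp [Complex.sub_im, Complex.mul_im, Complex.add_re, Complex.add_im,
      Complex.mul_re]
    try ring
  have hargs : ∀ n, ((1:ℂ) - 2 * ((s : ℂ) + (y : ℂ) * Complex.I) * (lam n : ℂ)).arg
      = -Real.arctan (2*lam n*y/(a n)) := by
    intro n
    rw [arg_eq_arctan' (by rw [hre n]; linarith [ha1 n]), hre n, him n, neg_div,
      Real.arctan_neg]
  have hsum : ∑ n, ((1:ℂ) - 2 * ((s : ℂ) + (y : ℂ) * Complex.I) * (lam n : ℂ)).arg
      = -(g y) := by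
    rw [Finset.sum_congr rfl (fun n _ => hargs n), hg]
    simp
  apply key_sign
  · intro n hc
    have h0 := hre n
    rw [hc, Complex.zero_re] at h0
    linarith [ha1 n]
  · rw [hsum]; linarith
  · rw [hsum]; linarith
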